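/- Let N ≥ 3, K(x) = exp(|x|²/4), and let c > 0 be a constant. Let v : ℝ^N → ℝ be a continuously differentiable function with ∫_{ℝ^N} K(x)(|∇v(x)|² + v(x)²) dx < ∞ which is a weak solution of −Δv − (1/2)(x·∇v) + c v = 0 on ℝ^N, that is, ∫_{ℝ^N} K(∇v·∇φ + c v φ) dx = 0 for every smooth compactly supported φ : ℝ^N → ℝ. Then v = 0 almost everywhere. -/

import Mathlib

open MeasureTheory Real Filter Topology RealInnerProductSpace

noncomputable section

abbrev En (N : ℕ) := EuclideanSpace ℝ (Fin N)

/-- The weight `K(x) = exp(|x|²/4)`. -/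
def Kw {N : ℕ} (x : En N) : ℝ := Real.exp (‖x‖ ^ 2 / 4)

open Metric Function ContinuousLinearMap
open scoped Convolution

section Aux

variable {N : ℕ}

lemma Kw_pos (x : En N) : 0 < Kw x := Real.exp_pos _

lemma Kw_continuous : Continuous (Kw (N := N)) :=
  Real.continuous_exp.comp ((continuous_norm.pow 2).div_const 4)

lemma inner_gradient (g : En N → ℝ) (x y : En N) : ⟪y, gradient g x⟫ = fderiv ℝ g x y := by
  rw [real_inner_comm, gradient, InnerProductSpace.toDual_symm_apply]

lemma gradient_continuous {v : En N → ℝ} (hv : ContDiff ℝ 1 v) :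
    Continuous (fun x => gradient v x) := by
  simp only [gradient]
  exact (LinearIsometryEquiv.continuous _).comp (hv.continuous_fderiv one_ne_zero)

/-- A fixed bump function equal to 1 on the unit ball with support in the ball of radius 2. -/
def chi (N : ℕ) : ContDiffBump (0 : En N) := ⟨1, 2, one_pos, one_lt_two⟩

lemma chi_smooth : ContDiff ℝ (⊤ : ℕ∞) (chi N) := (chi N).contDiff

/-- The rescaling map `x ↦ x / (k+1)`. -/
def Ak (N k : ℕ) : En N →L[ℝ] En N := (((k : ℝ) + 1)⁻¹) • ContinuousLinearMap.id ℝ (En N)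

/-- The cutoff `θ_k(x) = χ(x/(k+1))`. -/
def theta (N k : ℕ) (x : En N) : ℝ := chi N (Ak N k x)

lemma theta_smooth (k : ℕ) : ContDiff ℝ (⊤ : ℕ∞) (theta N k) :=
  chi_smooth.comp (Ak N k).contDiff

lemma theta_one (k : ℕ) (x : En N) (hx : ‖x‖ ≤ (k : ℝ) + 1) : theta N k x = 1 := by
  apply (chi N).one_of_mem_closedBall
  simp only [Ak, mem_closedBall, dist_zero_right, ContinuousLinearMap.smul_apply,
    ContinuousLinearMap.id_apply, norm_smul, norm_inv]
  rw [Real.norm_of_nonneg (by positivity)]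
  rw [inv_mul_le_iff₀ (by positivity)]
  simpa [chi] using by linarith

lemma theta_nonneg (k : ℕ) (x : En N) : 0 ≤ theta N k x := (chi N).nonneg
lemma theta_le_one (k : ℕ) (x : En N) : theta N k x ≤ 1 := (chi N).le_one

lemma theta_support (k : ℕ) : support (theta N k) ⊆ ball 0 (2 * ((k : ℝ) + 1)) := by
  intro x hx
  have h : Ak N k x ∈ support (chi N) := hx
  rw [(chi N).support_eq] at h
  simp only [chi, mem_ball, dist_zero_right] at h ⊢
  simp only [Ak, ContinuousLinearMap.smul_apply, ContinuousLinearMap.id_apply, norm_smul,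
    norm_inv, Real.norm_of_nonneg (show (0:ℝ) ≤ (k : ℝ) + 1 by positivity)] at h
  rw [inv_mul_lt_iff₀ (by positivity)] at h
  linarith

lemma theta_fderiv (k : ℕ) (x : En N) :
    fderiv ℝ (theta N k) x = (fderiv ℝ (chi N) (Ak N k x)).comp (Ak N k) := by
  rw [show theta N k = (chi N) ∘ (Ak N k) from rfl,
    fderiv_comp x ((chi_smooth.differentiable (by simp)).differentiableAt)
      (Ak N k).differentiableAt, (Ak N k).fderiv]

lemma exists_C : ∃ C : ℝ, 0 ≤ C ∧ ∀ y : En N, ‖fderiv ℝ (chi N) y‖ ≤ C := by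
  obtain ⟨C, hC⟩ := (chi_smooth.continuous_fderiv
      (by simp)).bounded_above_of_compact_support
    ((chi N).hasCompactSupport.fderiv (𝕜 := ℝ))
  exact ⟨max C 0, le_max_right _ _, fun y => (hC y).trans (le_max_left _ _)⟩

lemma Ak_norm_le (k : ℕ) : ‖Ak N k‖ ≤ ((k : ℝ) + 1)⁻¹ := by
  refine (ContinuousLinearMap.opNorm_smul_le _ _).trans ?_
  rw [Real.norm_of_nonneg (show (0:ℝ) ≤ ((k : ℝ) + 1)⁻¹ by positivity)]
  exact mul_le_of_le_one_right (by positivity) ContinuousLinearMap.norm_id_le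

lemma theta_fderiv_bound (k : ℕ) (x : En N) (C : ℝ)
    (hC : ∀ y : En N, ‖fderiv ℝ (chi N) y‖ ≤ C) :
    ‖fderiv ℝ (theta N k) x‖ ≤ C * ((k : ℝ) + 1)⁻¹ := by
  rw [theta_fderiv]
  refine (ContinuousLinearMap.opNorm_comp_le _ _).trans ?_
  exact mul_le_mul (hC _) (Ak_norm_le k) (norm_nonneg _) ((norm_nonneg _).trans (hC 0))

/-- Mollifiers. -/
def bump (N n : ℕ) : ContDiffBump (0 : En N) :=
  ⟨((n : ℝ) + 1)⁻¹ / 2, ((n : ℝ) + 1)⁻¹, by positivity, by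
    have : (0:ℝ) < ((n : ℝ) + 1)⁻¹ := by positivity
    linarith⟩

lemma bump_rOut_le_one (n : ℕ) : (bump N n).rOut ≤ 1 := by
  simp only [bump]
  rw [inv_le_one_iff₀]
  right; linarith [Nat.cast_nonneg (α := ℝ) n]

lemma bump_rOut_tendsto : Tendsto (fun n => (bump N n).rOut) atTop (𝓝 0) := by
  simp only [bump]
  exact tendsto_one_div_add_atTop_nhds_zero_nat.congr (by intro n; rw [one_div])

lemma precompR_lsmul :
    ((ContinuousLinearMap.lsmul ℝ ℝ : ℝ →L[ℝ] ℝ →L[ℝ] ℝ).precompR (En N) :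
      ℝ →L[ℝ] (En N →L[ℝ] ℝ) →L[ℝ] (En N →L[ℝ] ℝ)) = ContinuousLinearMap.lsmul ℝ ℝ := by
  ext r T
  simp [ContinuousLinearMap.precompR]

/-- Norm bound on a mollification. -/
lemma conv_norm_le {E' : Type*} [NormedAddCommGroup E'] [NormedSpace ℝ E'] [CompleteSpace E']
    (n : ℕ) (x : En N) (g : En N → E') (hg : Continuous g) (M : ℝ) (hM : 0 ≤ M)
    (hb : ∀ y, ‖g y‖ ≤ M) :
    ‖((bump N n).normed volume ⋆[lsmul ℝ ℝ, volume] g) x‖ ≤ M := by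
  have := dist_convolution_le (f := (bump N n).normed volume) (x₀ := x) (z₀ := (0 : E'))
    hM (bump N n).support_normed_eq.subset (bump N n).nonneg_normed (bump N n).integral_normed
    hg.aestronglyMeasurable (fun y _ => by simpa [dist_eq_norm] using hb y)
  simpa [dist_eq_norm] using this

lemma conv_tendsto {E' : Type*} [NormedAddCommGroup E'] [NormedSpace ℝ E'] [CompleteSpace E']
    (x : En N) (g : En N → E') (hg : Continuous g) :
    Tendsto (fun n => ((bump N n).normed volume ⋆[lsmul ℝ ℝ, volume] g) x) atTop (𝓝 (g x)) :=
  ContDiffBump.convolution_tendsto_right_of_continuous bump_rOut_tendsto hg x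

lemma conv_support_zero {E' : Type*} [NormedAddCommGroup E'] [NormedSpace ℝ E']
    (n : ℕ) (S : ℝ) (hS : 0 ≤ S) (g : En N → E') (hgs : support g ⊆ closedBall 0 S)
    (x : En N) (hx : x ∉ closedBall (0 : En N) (S + 1)) :
    ((bump N n).normed volume ⋆[lsmul ℝ ℝ, volume] g) x = 0 := by
  by_contra h
  have hmem : x ∈ support ((bump N n).normed volume ⋆[lsmul ℝ ℝ, volume] g) := h
  have := support_convolution_subset (lsmul ℝ ℝ) (μ := volume)
    (f := (bump N n).normed volume) (g := g) hmem
  obtain ⟨a, ha, b, hb, rfl⟩ := this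
  apply hx
  rw [(bump N n).support_normed_eq] at ha
  have ha' : ‖a‖ ≤ 1 := by
    have := mem_ball_zero_iff.mp ha
    linarith [bump_rOut_le_one (N := N) n]
  have hb' : ‖b‖ ≤ S := mem_closedBall_zero_iff.mp (hgs hb)
  rw [mem_closedBall_zero_iff]
  calc ‖a + b‖ ≤ ‖a‖ + ‖b‖ := norm_add_le _ _
    _ ≤ S + 1 := by linarith

end Aux

set_option maxHeartbeats 1000000 in
/-- Liouville-type result: if `c > 0` and `v ∈ H_K^1(ℝ^N)` is a `C¹`
weak solution of `−Δv − (1/2)(x·∇v) + cv = 0` on `ℝ^N`, then `v = 0` a.e. -/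
theorem liouville {N : ℕ} (hN : 3 ≤ N) (c : ℝ) (hc : 0 < c)
    (v : En N → ℝ) (hv : ContDiff ℝ 1 v)
    (hv_int : Integrable (fun x => Kw x * (‖gradient v x‖ ^ 2 + v x ^ 2)))
    (hweak : ∀ φ : En N → ℝ, ContDiff ℝ (⊤ : ℕ∞) φ → HasCompactSupport φ →
      (∫ x, Kw x * (⟪gradient v x, gradient φ x⟫ + c * v x * φ x)) = 0) :
    ∀ᵐ x : En N, v x = 0 := by
  classical
  obtain ⟨C, hC0, hC⟩ := exists_C (N := N)
  have hgradv : Continuous (fun x => gradient v x) := gradient_continuous hv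
  have hDv : Continuous (fderiv ℝ v) := hv.continuous_fderiv one_ne_zero
  -- Stage 1: for each k, testing against mollifications of `θ_k v` gives
  -- `∫ Kw (D(θ_k v)(∇v) + c v θ_k v) = 0`.
  have key : ∀ k : ℕ, (∫ x, Kw x * ((fderiv ℝ (fun y => theta N k y * v y) x) (gradient v x)
      + c * v x * (theta N k x * v x))) = 0 := by
    intro k
    set S : ℝ := 2 * ((k : ℝ) + 1) with hSdef
    have hS0 : (0:ℝ) ≤ S := by positivity
    set vθ : En N → ℝ := fun y => theta N k y * v y with hvθdef
    have hvθ : ContDiff ℝ 1 vθ :=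
      ((theta_smooth k).of_le (by exact_mod_cast le_top)).mul hv
    have hvθsupp : support vθ ⊆ ball 0 S := fun x hx => by
      apply theta_support k
      intro h0
      apply hx
      simp [hvθdef, h0]
    have hcvθ : HasCompactSupport vθ :=
      HasCompactSupport.intro (isCompact_closedBall 0 S)
        (fun x hx => by
          by_contra h
          exact hx (ball_subset_closedBall (hvθsupp h)))
    have hDvθ : Continuous (fderiv ℝ vθ) := hvθ.continuous_fderiv one_ne_zero
    have hDvθsupp : support (fderiv ℝ vθ) ⊆ closedBall 0 S := by
      refine (support_fderiv_subset ℝ).trans ?_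
      refine (closure_mono hvθsupp).trans ?_
      rw [closure_ball (0 : En N) (by positivity)]
    -- mollifications
    set vn : ℕ → En N → ℝ :=
      fun n => (bump N n).normed volume ⋆[lsmul ℝ ℝ, volume] vθ with hvndef
    set Dn : ℕ → En N → (En N →L[ℝ] ℝ) :=
      fun n => (bump N n).normed volume ⋆[lsmul ℝ ℝ, volume] (fderiv ℝ vθ) with hDndef
    have hvn_smooth : ∀ n, ContDiff ℝ (⊤ : ℕ∞) (vn n) := fun n =>
      (bump N n).hasCompactSupport_normed.contDiff_convolution_left _
        (bump N n).contDiff_normed (hvθ.continuous.locallyIntegrable)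
    have hvn_supp : ∀ n, HasCompactSupport (vn n) := fun n =>
      HasCompactSupport.convolution (L := lsmul ℝ ℝ) (μ := volume)
        (bump N n).hasCompactSupport_normed hcvθ
    have hvn_fderiv : ∀ n x, fderiv ℝ (vn n) x = Dn n x := by
      intro n x
      have h : HasFDerivAt (vn n)
          (((bump N n).normed volume ⋆[(lsmul ℝ ℝ).precompR (En N), volume] fderiv ℝ vθ) x) x :=
        hcvθ.hasFDerivAt_convolution_right _
          ((bump N n).integrable_normed.locallyIntegrable) hvθ x
      rw [h.fderiv, hDndef, precompR_lsmul]
    -- the weak formulation applied to `vn n`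
    have hzero : ∀ n, (∫ x, Kw x *
        (⟪gradient v x, gradient (vn n) x⟫ + c * v x * vn n x)) = 0 :=
      fun n => hweak (vn n) (hvn_smooth n) (hvn_supp n)
    -- rewrite the integrand using `Dn`
    have hFn_eq : ∀ n x, Kw x * (⟪gradient v x, gradient (vn n) x⟫ + c * v x * vn n x)
        = Kw x * ((Dn n x) (gradient v x) + c * v x * vn n x) := by
      intro n x
      rw [inner_gradient (vn n) x (gradient v x), hvn_fderiv n x]
    -- bounds
    obtain ⟨M₀, hM₀⟩ := hvθ.continuous.bounded_above_of_compact_support hcvθ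
    obtain ⟨M₁, hM₁⟩ := hDvθ.bounded_above_of_compact_support (hcvθ.fderiv (𝕜 := ℝ))
    have hM₀0 : 0 ≤ M₀ := (norm_nonneg _).trans (hM₀ 0)
    have hM₁0 : 0 ≤ M₁ := (norm_nonneg _).trans (hM₁ 0)
    have hvn_bound : ∀ n x, ‖vn n x‖ ≤ M₀ := fun n x =>
      conv_norm_le n x vθ hvθ.continuous M₀ hM₀0 hM₀
    have hDn_bound : ∀ n x, ‖Dn n x‖ ≤ M₁ := fun n x =>
      conv_norm_le n x (fderiv ℝ vθ) hDvθ M₁ hM₁0 hM₁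
    -- dominating function
    set h : En N → ℝ := fun x => Kw x * (M₁ * ‖gradient v x‖ + c * |v x| * M₀) with hhdef
    have hhcont : Continuous h :=
      Kw_continuous.mul (((continuous_const.mul hgradv.norm)).add
        ((continuous_const.mul hv.continuous.abs).mul continuous_const))
    obtain ⟨D, hD⟩ := (isCompact_closedBall (0 : En N) (S + 1)).exists_bound_of_continuousOn
      hhcont.continuousOn
    set bound : En N → ℝ := (closedBall (0 : En N) (S + 1)).indicator (fun _ => D) with hbd
    have hbound_int : Integrable bound := by
      rw [hbd]
      exact ((integrableOn_const_iff).mpr (Or.inr measure_closedBall_lt_top)).integrable_indicator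
        measurableSet_closedBall
    have hptbound : ∀ n x,
        ‖Kw x * ((Dn n x) (gradient v x) + c * v x * vn n x)‖ ≤ bound x := by
      intro n x
      by_cases hx : x ∈ closedBall (0 : En N) (S + 1)
      · rw [hbd, Set.indicator_of_mem hx]
        have h1 : |(Dn n x) (gradient v x)| ≤ M₁ * ‖gradient v x‖ := by
          calc |(Dn n x) (gradient v x)| = ‖(Dn n x) (gradient v x)‖ := rfl
            _ ≤ ‖Dn n x‖ * ‖gradient v x‖ := le_opNorm _ _
            _ ≤ M₁ * ‖gradient v x‖ :=
              mul_le_mul_of_nonneg_right (hDn_bound n x) (norm_nonneg _)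
        have h2 : |c * v x * vn n x| ≤ c * |v x| * M₀ := by
          rw [abs_mul, abs_mul, abs_of_nonneg hc.le]
          exact mul_le_mul_of_nonneg_left (hvn_bound n x) (by positivity)
        calc ‖Kw x * ((Dn n x) (gradient v x) + c * v x * vn n x)‖
            = Kw x * |(Dn n x) (gradient v x) + c * v x * vn n x| := by
              rw [norm_mul, Real.norm_of_nonneg (Kw_pos x).le]; rfl
          _ ≤ Kw x * (M₁ * ‖gradient v x‖ + c * |v x| * M₀) := by
              refine mul_le_mul_of_nonneg_left ?_ (Kw_pos x).le
              exact (abs_add_le _ _).trans (add_le_add h1 h2)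
          _ = h x := rfl
          _ ≤ ‖h x‖ := le_abs_self _
          _ ≤ D := hD x hx
      · rw [hbd, Set.indicator_of_notMem hx]
        have hv0 : vn n x = 0 :=
          conv_support_zero n S hS0 vθ
            ((hvθsupp).trans ball_subset_closedBall) x hx
        have hD0 : Dn n x = 0 := conv_support_zero n S hS0 (fderiv ℝ vθ) hDvθsupp x hx
        rw [hv0, hD0]
        simp
    -- pointwise convergence
    have hptlim : ∀ x, Tendsto (fun n => Kw x * ((Dn n x) (gradient v x) + c * v x * vn n x))
        atTop (𝓝 (Kw x * ((fderiv ℝ vθ x) (gradient v x) + c * v x * vθ x))) := by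
      intro x
      have l1 : Tendsto (fun n => Dn n x) atTop (𝓝 (fderiv ℝ vθ x)) :=
        conv_tendsto x (fderiv ℝ vθ) hDvθ
      have l1' : Tendsto (fun n => (Dn n x) (gradient v x)) atTop
          (𝓝 ((fderiv ℝ vθ x) (gradient v x))) := by
        have hcontap : Continuous fun T : En N →L[ℝ] ℝ => T (gradient v x) :=
          (ContinuousLinearMap.apply ℝ ℝ (gradient v x)).continuous
        exact (hcontap.tendsto _).comp l1
      have l2 : Tendsto (fun n => vn n x) atTop (𝓝 (vθ x)) :=
        conv_tendsto x vθ hvθ.continuous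
      exact tendsto_const_nhds.mul (l1'.add (tendsto_const_nhds.mul l2))
    -- measurability
    have hmeas : ∀ n, AEStronglyMeasurable
        (fun x => Kw x * ((Dn n x) (gradient v x) + c * v x * vn n x)) volume := by
      intro n
      have hDncont : Continuous (Dn n) := by
        have : Continuous (fderiv ℝ (vn n)) :=
          ((hvn_smooth n).of_le (by exact_mod_cast le_top)).continuous_fderiv one_ne_zero
        exact this.congr (fun x => hvn_fderiv n x)
      have : Continuous fun x => Kw x * ((Dn n x) (gradient v x) + c * v x * vn n x) :=
        Kw_continuous.mul ((hDncont.clm_apply hgradv).add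
          ((continuous_const.mul hv.continuous).mul ((hvn_smooth n).continuous)))
      exact this.aestronglyMeasurable
    -- dominated convergence
    have hDCT := tendsto_integral_of_dominated_convergence bound hmeas hbound_int
      (fun n => Eventually.of_forall (hptbound n))
      (Eventually.of_forall hptlim)
    have hzero' : ∀ n, (∫ x, Kw x * ((Dn n x) (gradient v x) + c * v x * vn n x)) = 0 := by
      intro n
      rw [← hzero n]
      exact integral_congr_ae (Eventually.of_forall fun x => (hFn_eq n x).symm)
    rw [show (fun n => ∫ x, Kw x * ((Dn n x) (gradient v x) + c * v x * vn n x))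
      = fun _ => (0:ℝ) from funext hzero'] at hDCT
    exact (tendsto_nhds_unique tendsto_const_nhds hDCT).symm
  -- Stage 2: let `k → ∞`.
  have hDvgrad : ∀ x, (fderiv ℝ v x) (gradient v x) = ‖gradient v x‖ ^ 2 := by
    intro x
    rw [← inner_gradient v x (gradient v x), real_inner_self_eq_norm_sq]
  have hthetav_fderiv : ∀ k (x : En N), fderiv ℝ (fun y => theta N k y * v y) x
      = theta N k x • fderiv ℝ v x + v x • fderiv ℝ (theta N k) x := by
    intro k x
    exact fderiv_mul (((theta_smooth k).differentiable
      (by simp)).differentiableAt)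
      ((hv.differentiable one_ne_zero).differentiableAt)
  set G : ℕ → En N → ℝ := fun k x => Kw x * (theta N k x * ‖gradient v x‖ ^ 2
    + v x * ((fderiv ℝ (theta N k) x) (gradient v x)) + c * theta N k x * v x ^ 2) with hGdef
  have hGzero : ∀ k, (∫ x, G k x) = 0 := by
    intro k
    rw [← key k]
    apply integral_congr_ae
    apply Eventually.of_forall
    intro x
    simp only [hGdef]
    rw [hthetav_fderiv k x]
    simp only [ContinuousLinearMap.add_apply, ContinuousLinearMap.coe_smul',
      Pi.smul_apply, smul_eq_mul]
    rw [hDvgrad x]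
    ring
  set bound2 : En N → ℝ := fun x => (1 + C + c) * (Kw x * (‖gradient v x‖ ^ 2 + v x ^ 2))
    with hb2def
  have hbound2_int : Integrable bound2 := hv_int.const_mul _
  have hGbound : ∀ k x, ‖G k x‖ ≤ bound2 x := by
    intro k x
    have hθ1 : 0 ≤ theta N k x := theta_nonneg k x
    have hθ2 : theta N k x ≤ 1 := theta_le_one k x
    have hDθ : ‖fderiv ℝ (theta N k) x‖ ≤ C := by
      refine (theta_fderiv_bound k x C hC).trans ?_
      have : ((k : ℝ) + 1)⁻¹ ≤ 1 := by
        rw [inv_le_one_iff₀]; right; linarith [Nat.cast_nonneg (α := ℝ) k]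
      exact mul_le_of_le_one_right hC0 this
    have h1 : |theta N k x * ‖gradient v x‖ ^ 2| ≤ ‖gradient v x‖ ^ 2 := by
      rw [abs_mul, abs_of_nonneg hθ1, abs_of_nonneg (by positivity)]
      exact mul_le_of_le_one_left (by positivity) hθ2
    have h2 : |v x * ((fderiv ℝ (theta N k) x) (gradient v x))|
        ≤ C * (|v x| * ‖gradient v x‖) := by
      rw [abs_mul]
      have : |(fderiv ℝ (theta N k) x) (gradient v x)| ≤ C * ‖gradient v x‖ := by
        calc |(fderiv ℝ (theta N k) x) (gradient v x)|
            = ‖(fderiv ℝ (theta N k) x) (gradient v x)‖ := (Real.norm_eq_abs _).symm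
          _ ≤ ‖fderiv ℝ (theta N k) x‖ * ‖gradient v x‖ := le_opNorm _ _
          _ ≤ C * ‖gradient v x‖ := mul_le_mul_of_nonneg_right hDθ (norm_nonneg _)
      calc |v x| * |(fderiv ℝ (theta N k) x) (gradient v x)|
          ≤ |v x| * (C * ‖gradient v x‖) :=
            mul_le_mul_of_nonneg_left this (abs_nonneg _)
        _ = C * (|v x| * ‖gradient v x‖) := by ring
    have h3 : |c * theta N k x * v x ^ 2| ≤ c * v x ^ 2 := by
      rw [abs_mul, abs_mul, abs_of_nonneg hc.le, abs_of_nonneg hθ1,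
        abs_of_nonneg (by positivity : (0:ℝ) ≤ v x ^ 2)]
      nlinarith [mul_nonneg (mul_nonneg hc.le (sq_nonneg (v x))) (sub_nonneg.mpr hθ2)]
    have habs : |theta N k x * ‖gradient v x‖ ^ 2
        + v x * ((fderiv ℝ (theta N k) x) (gradient v x)) + c * theta N k x * v x ^ 2|
        ≤ (1 + C + c) * (‖gradient v x‖ ^ 2 + v x ^ 2) := by
      have hsq : |v x| * ‖gradient v x‖ ≤ (v x ^ 2 + ‖gradient v x‖ ^ 2) / 2 := by
        nlinarith [sq_nonneg (|v x| - ‖gradient v x‖), sq_abs (v x)]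
      calc |theta N k x * ‖gradient v x‖ ^ 2
          + v x * ((fderiv ℝ (theta N k) x) (gradient v x)) + c * theta N k x * v x ^ 2|
          ≤ |theta N k x * ‖gradient v x‖ ^ 2
            + v x * ((fderiv ℝ (theta N k) x) (gradient v x))| + |c * theta N k x * v x ^ 2| :=
            abs_add_le _ _
        _ ≤ |theta N k x * ‖gradient v x‖ ^ 2|
            + |v x * ((fderiv ℝ (theta N k) x) (gradient v x))| + |c * theta N k x * v x ^ 2| :=
            add_le_add_left (abs_add_le _ _) _
        _ ≤ ‖gradient v x‖ ^ 2 + C * (|v x| * ‖gradient v x‖) + c * v x ^ 2 := by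
            exact add_le_add (add_le_add h1 h2) h3
        _ ≤ (1 + C + c) * (‖gradient v x‖ ^ 2 + v x ^ 2) := by
            nlinarith [sq_nonneg (v x), sq_nonneg ‖gradient v x‖,
              mul_le_mul_of_nonneg_left hsq hC0, sq_abs (v x)]
    calc ‖G k x‖ = Kw x * |theta N k x * ‖gradient v x‖ ^ 2
          + v x * ((fderiv ℝ (theta N k) x) (gradient v x)) + c * theta N k x * v x ^ 2| := by
          simp only [hGdef]
          rw [norm_mul, Real.norm_of_nonneg (Kw_pos x).le]; rfl
      _ ≤ Kw x * ((1 + C + c) * (‖gradient v x‖ ^ 2 + v x ^ 2)) :=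
          mul_le_mul_of_nonneg_left habs (Kw_pos x).le
      _ = bound2 x := by rw [hb2def]; ring
  have hGmeas : ∀ k, AEStronglyMeasurable (G k) volume := by
    intro k
    have hθc : Continuous (theta N k) := (theta_smooth k).continuous
    have hDθc : Continuous (fderiv ℝ (theta N k)) :=
      (theta_smooth k).continuous_fderiv (by simp)
    have : Continuous (G k) := by
      rw [hGdef]
      exact Kw_continuous.mul (((hθc.mul (hgradv.norm.pow 2)).add
        (hv.continuous.mul (hDθc.clm_apply hgradv))).add
        ((continuous_const.mul hθc).mul (hv.continuous.pow 2)))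
    exact this.aestronglyMeasurable
  have hGlim : ∀ x, Tendsto (fun k => G k x) atTop
      (𝓝 (Kw x * (‖gradient v x‖ ^ 2 + c * v x ^ 2))) := by
    intro x
    have l1 : Tendsto (fun k => theta N k x) atTop (𝓝 1) := by
      apply tendsto_const_nhds.congr'
      filter_upwards [eventually_ge_atTop ⌈‖x‖⌉₊] with k hk
      rw [theta_one k x]
      calc ‖x‖ ≤ (⌈‖x‖⌉₊ : ℝ) := Nat.le_ceil _
        _ ≤ (k : ℝ) := by exact_mod_cast hk
        _ ≤ (k : ℝ) + 1 := by linarith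
    have l2 : Tendsto (fun k => v x * ((fderiv ℝ (theta N k) x) (gradient v x)))
        atTop (𝓝 0) := by
      have hi : Tendsto (fun k : ℕ => ((k:ℝ)+1)⁻¹) atTop (𝓝 0) :=
        tendsto_one_div_add_atTop_nhds_zero_nat.congr (by intro n; rw [one_div])
      have h2 : Tendsto (fun k : ℕ => |v x| * (C * ((k:ℝ)+1)⁻¹ * ‖gradient v x‖))
          atTop (𝓝 0) := by
        have := ((hi.const_mul C).mul_const ‖gradient v x‖).const_mul (|v x|)
        simpa using this
      refine squeeze_zero_norm (fun k => ?_) h2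
      rw [norm_mul]
      refine mul_le_mul_of_nonneg_left ?_ (abs_nonneg _)
      calc ‖(fderiv ℝ (theta N k) x) (gradient v x)‖
          ≤ ‖fderiv ℝ (theta N k) x‖ * ‖gradient v x‖ := le_opNorm _ _
        _ ≤ C * ((k:ℝ)+1)⁻¹ * ‖gradient v x‖ :=
          mul_le_mul_of_nonneg_right (theta_fderiv_bound k x C hC) (norm_nonneg _)
    have l3 : Tendsto (fun k => theta N k x * ‖gradient v x‖ ^ 2) atTop
        (𝓝 (1 * ‖gradient v x‖ ^ 2)) := l1.mul_const _
    have l4 : Tendsto (fun k => c * theta N k x * v x ^ 2) atTop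
        (𝓝 (c * 1 * v x ^ 2)) := (l1.const_mul c).mul_const _
    have l5 := (l3.add l2).add l4
    have l6 := l5.const_mul (Kw x)
    simp only [hGdef]
    convert l6 using 2
    ring
  have hDCT2 := tendsto_integral_of_dominated_convergence bound2 hGmeas hbound2_int
    (fun k => Eventually.of_forall (hGbound k)) (Eventually.of_forall hGlim)
  rw [show (fun k => ∫ x, G k x) = fun _ => (0:ℝ) from funext hGzero] at hDCT2
  have hint0 : (∫ x, Kw x * (‖gradient v x‖ ^ 2 + c * v x ^ 2)) = 0 :=
    (tendsto_nhds_unique tendsto_const_nhds hDCT2).symm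
  -- conclusion
  set f : En N → ℝ := fun x => Kw x * (‖gradient v x‖ ^ 2 + c * v x ^ 2) with hfdef
  have hfnonneg : ∀ x, 0 ≤ f x := fun x => by
    have := Kw_pos x
    positivity
  have hfmeas : AEStronglyMeasurable f volume :=
    (Kw_continuous.mul ((hgradv.norm.pow 2).add
      (continuous_const.mul (hv.continuous.pow 2)))).aestronglyMeasurable
  have hfint : Integrable f := by
    refine hbound2_int.mono' hfmeas (Eventually.of_forall fun x => ?_)
    rw [Real.norm_of_nonneg (hfnonneg x), hfdef, hb2def]
    simp only
    have h1 : ‖gradient v x‖ ^ 2 + c * v x ^ 2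
        ≤ (1 + C + c) * (‖gradient v x‖ ^ 2 + v x ^ 2) := by
      nlinarith [sq_nonneg (v x), sq_nonneg ‖gradient v x‖]
    exact (mul_le_mul_of_nonneg_left h1 (Kw_pos x).le).trans_eq (by ring)
  have hae : f =ᵐ[volume] 0 :=
    (integral_eq_zero_iff_of_nonneg hfnonneg hfint).mp hint0
  filter_upwards [hae] with x hx
  have hx' : Kw x * (‖gradient v x‖ ^ 2 + c * v x ^ 2) = 0 := hx
  have hKx := Kw_pos x
  have h0 : ‖gradient v x‖ ^ 2 + c * v x ^ 2 = 0 := by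
    rcases mul_eq_zero.mp hx' with h1 | h1
    · exact absurd h1 hKx.ne'
    · exact h1
  have : v x ^ 2 = 0 := by nlinarith [sq_nonneg ‖gradient v x‖, sq_nonneg (v x)]
  exact pow_eq_zero_iff (by norm_num) |>.mp this
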